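/- Let R be a PVMD, T a t-linked overring of R, and P a nonzero t-prime ideal of R. Then (PT)_{t₁} ≠ T if and only if T ⊆ R_P, where t₁ denotes the t-operation of the ring T. -/
import Mathlib


/-!
Common definitions: star operations (`v`- and `t`-closure), `t`-ideals, `t`-invertibility,
PVMDs, overrings, `t`-linked and `t`-flat overrings, localizations inside the quotient
field, Nagata and Kaplansky transforms, endomorphism rings of ideals.
-/

open scoped Classical

namespace PVMDPaper

noncomputable section

section Generic

variable (A : Type*) [CommRing A] (K : Type*) [Field K] [Algebra A K]

/-- The image of an integral ideal of `A` inside the field `K`, as an `A`-submodule of `K`. -/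
def toK (I : Ideal A) : Submodule A K := Submodule.map (Algebra.linearMap A K) I

variable {A K}

/-- The dual `I⁻¹ = (A : I) = {x ∈ K : x I ⊆ A}` of a submodule of `K`. -/
def dual (I : Submodule A K) : Submodule A K := 1 / I

/-- The `v`-closure `I_v = (I⁻¹)⁻¹`. -/
def vOp (I : Submodule A K) : Submodule A K := 1 / (1 / I)

/-- The `t`-closure `I_t`: the union of `J_v` where `J` ranges over the nonzero finitely
generated submodules `J ≤ I` (the union of this directed family is its supremum). -/
def tOp (I : Submodule A K) : Submodule A K :=
  sSup {V | ∃ J : Submodule A K, J ≠ ⊥ ∧ J.FG ∧ J ≤ I ∧ V = vOp J}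

variable (K)

/-- An (integral) ideal `I` of `A` is a `t`-ideal if `I = I_t`. -/
def IsTIdeal (I : Ideal A) : Prop := tOp (toK A K I) = toK A K I

/-- An ideal `I` is `t`-invertible if `(I I⁻¹)_t = A`. -/
def IsTInvertible (I : Ideal A) : Prop := tOp (toK A K I * dual (toK A K I)) = 1

/-- A `t`-maximal ideal: an ideal maximal in the set of proper integral `t`-ideals. -/
def IsTMaximal (M : Ideal A) : Prop :=
  M ≠ ⊤ ∧ IsTIdeal K M ∧ ∀ J : Ideal A, J ≠ ⊤ → IsTIdeal K J → M ≤ J → J = M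

variable (A)

/-- `A` is a Prüfer `v`-multiplication domain: every nonzero finitely generated ideal
is `t`-invertible. -/
def IsPVMD : Prop := ∀ I : Ideal A, I ≠ ⊥ → I.FG → IsTInvertible K I

/-- `Spec_t(A)` is Noetherian: the ascending chain condition on radical `t`-ideals. -/
def TSpecNoetherian : Prop :=
  ∀ f : ℕ →o Ideal A, (∀ n, IsTIdeal K (f n) ∧ (f n).radical = f n) →
    ∃ n, ∀ m, n ≤ m → f m = f n

variable {A K}

/-- A submodule of `K` is a subring of `K` iff it contains `1` and is closed under
multiplication (being an additive subgroup already). -/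
def IsSubringOf (S : Submodule A K) : Prop :=
  (1 : K) ∈ S ∧ ∀ x ∈ S, ∀ y ∈ S, x * y ∈ S

variable (K)

/-- The localization `A_P = {a/s : a ∈ A, s ∈ A ∖ P}` viewed as a subset of `K`. -/
def loc (P : Ideal A) : Set K :=
  {x | ∃ a s : A, s ∉ P ∧ x * algebraMap A K s = algebraMap A K a}

/-- The set `J A_P = {a/s : a ∈ J, s ∈ A ∖ P} ⊆ K`. -/
def locIdealAt (J P : Ideal A) : Set K :=
  {x | ∃ a ∈ J, ∃ s : A, s ∉ P ∧ x * algebraMap A K s = algebraMap A K a}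

/-- `Z(A, I)`: the set of zero divisors on `A/I`. -/
def ZSet (I : Ideal A) : Set A := {x | ∃ a : A, a ∉ I ∧ x * a ∈ I}

/-- `Q` is a maximal prime ideal of `Z(A,I)`: a prime contained in `Z(A,I)`, maximal
(under inclusion) among the primes contained in `Z(A,I)`. -/
def MaxPrimeOfZ (I Q : Ideal A) : Prop :=
  Q.IsPrime ∧ (Q : Set A) ⊆ ZSet I ∧
    ∀ Q' : Ideal A, Q'.IsPrime → (Q' : Set A) ⊆ ZSet I → Q ≤ Q' → Q' = Q

end Generic

section Overring

variable {R : Type*} [CommRing R] [IsDomain R]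
variable {K : Type*} [Field K] [Algebra R K] [IsFractionRing R K]

/-- The extension `IT` of an ideal `I` of `R` to an overring `T`, as a `T`-submodule of `K`. -/
def extendI (I : Ideal R) (T : Subalgebra R K) : Submodule T K :=
  Submodule.span T (algebraMap R K '' (I : Set R))

/-- The extension `IT` of an `R`-submodule `I` of `K` to an overring `T`. -/
def extendS (I : Submodule R K) (T : Subalgebra R K) : Submodule T K :=
  Submodule.span T (I : Set K)

/-- An overring `T` of `R` is `t`-linked over `R` if `(IT)⁻¹ = T` for each finitely
generated ideal `I` of `R` with `I⁻¹ = R`. -/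
def IsTLinked (T : Subalgebra R K) : Prop :=
  ∀ I : Ideal R, I.FG → dual (toK R K I) = 1 → dual (extendI I T) = 1

/-- An overring `T` of `R` is `t`-flat over `R` if `T_M = R_{M ∩ R}` for each
`t`-maximal ideal `M` of `T`. -/
def IsTFlat (T : Subalgebra R K) : Prop :=
  ∀ M : Ideal T, IsTMaximal K M → loc K M = loc K (M.comap (algebraMap R T))

variable (R K)

/-- `R` is a `tQR`-domain: a PVMD all of whose `t`-linked overrings are localizations
of `R` at multiplicative sets. -/
def IsTQR : Prop :=
  IsPVMD R K ∧ ∀ T : Subalgebra R K, IsTLinked T → ∃ S : Submonoid R,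
    (T : Set K) = {x | ∃ a : R, ∃ s ∈ S, x * algebraMap R K s = algebraMap R K a}

variable {R K}
variable (K)

/-- The endomorphism ring `(I : I) = {x ∈ K : x I ⊆ I}` of an ideal `I`, as an
overring of `R`. -/
def endoRing (I : Ideal R) : Subalgebra R K where
  carrier := {x : K | ∀ y ∈ toK R K I, x * y ∈ toK R K I}
  mul_mem' := by
    intro a b ha hb y hy
    rw [mul_assoc]
    exact ha _ (hb _ hy)
  one_mem' := by
    intro y hy
    rwa [one_mul]
  add_mem' := by
    intro a b ha hb y hy
    rw [add_mul]
    exact Submodule.add_mem _ (ha y hy) (hb y hy)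
  zero_mem' := by
    intro y hy
    rw [zero_mul]
    exact Submodule.zero_mem _
  algebraMap_mem' := by
    intro r y hy
    rw [← Algebra.smul_def]
    exact Submodule.smul_mem _ r hy

set_option synthInstance.maxHeartbeats 400000 in
/-- The ideal `I`, viewed as an ideal of its endomorphism ring `(I : I)`. -/
def idealInEndo (I : Ideal R) : Ideal (endoRing K I) where
  carrier := {x | (x : K) ∈ toK R K I}
  add_mem' := by
    intro a b ha hb
    simp only [Set.mem_setOf_eq] at *
    rw [AddMemClass.coe_add]
    exact Submodule.add_mem _ ha hb
  zero_mem' := by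
    simp only [Set.mem_setOf_eq, ZeroMemClass.coe_zero]
    exact Submodule.zero_mem _
  smul_mem' := by
    intro c x hx
    simp only [Set.mem_setOf_eq] at *
    rw [smul_eq_mul, MulMemClass.coe_mul]
    exact c.2 _ hx

/-- The Kaplansky transform `Ω(I) = {u ∈ K : ∀ a ∈ I, ∃ n ≥ 1, u aⁿ ∈ R}`, as an
overring of `R`. -/
def kaplansky (I : Ideal R) : Subalgebra R K where
  carrier := {u : K | ∀ a ∈ I, ∃ n : ℕ, 0 < n ∧
    ∃ r : R, u * (algebraMap R K a) ^ n = algebraMap R K r}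
  mul_mem' := by
    intro u v hu hv a ha
    obtain ⟨n, hn, r, hr⟩ := hu a ha
    obtain ⟨m, hm, s, hs⟩ := hv a ha
    refine ⟨n + m, by omega, r * s, ?_⟩
    rw [map_mul, ← hr, ← hs, pow_add]
    ring
  one_mem' := by
    intro a ha
    exact ⟨1, one_pos, a, by rw [pow_one, one_mul]⟩
  add_mem' := by
    intro u v hu hv a ha
    obtain ⟨n, hn, r, hr⟩ := hu a ha
    obtain ⟨m, hm, s, hs⟩ := hv a ha
    refine ⟨n + m, by omega, r * a ^ m + s * a ^ n, ?_⟩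
    rw [map_add, map_mul, map_mul, map_pow, map_pow, ← hr, ← hs, pow_add, add_mul]
    ring
  zero_mem' := by
    intro a ha
    exact ⟨1, one_pos, 0, by rw [map_zero, zero_mul]⟩
  algebraMap_mem' := by
    intro r a ha
    exact ⟨1, one_pos, r * a, by rw [map_mul, pow_one]⟩

/-- The Nagata (ideal) transform `T(I) = ⋃_{n ≥ 1} (R : Iⁿ)`, as an overring of `R`. -/
def nagata (I : Ideal R) : Subalgebra R K where
  carrier := {x : K | ∃ n : ℕ, ∀ y ∈ I ^ (n + 1),
    ∃ r : R, x * algebraMap R K y = algebraMap R K r}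
  mul_mem' := by
    intro x x' hx hx'
    obtain ⟨n, hn⟩ := hx
    obtain ⟨m, hm⟩ := hx'
    refine ⟨n + m + 1, fun y hy => ?_⟩
    rw [show n + m + 1 + 1 = (n + 1) + (m + 1) by omega, pow_add] at hy
    refine Submodule.mul_induction_on hy ?_ ?_
    · intro a ha b hb
      obtain ⟨r, hr⟩ := hn a ha
      obtain ⟨s, hs⟩ := hm b hb
      refine ⟨r * s, ?_⟩
      rw [map_mul, map_mul, ← hr, ← hs]
      ring
    · rintro y1 y2 ⟨r1, h1⟩ ⟨r2, h2⟩
      exact ⟨r1 + r2, by rw [map_add, map_add, mul_add, h1, h2]⟩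
  one_mem' := ⟨0, fun y _ => ⟨y, by rw [one_mul]⟩⟩
  add_mem' := by
    intro x x' hx hx'
    obtain ⟨n, hn⟩ := hx
    obtain ⟨m, hm⟩ := hx'
    refine ⟨n + m + 1, fun y hy => ?_⟩
    have h1 : y ∈ I ^ (n + 1) := Ideal.pow_le_pow_right (by omega) hy
    have h2 : y ∈ I ^ (m + 1) := Ideal.pow_le_pow_right (by omega) hy
    obtain ⟨r, hr⟩ := hn y h1
    obtain ⟨s, hs⟩ := hm y h2
    exact ⟨r + s, by rw [map_add, add_mul, hr, hs]⟩
  zero_mem' := ⟨0, fun y _ => ⟨0, by rw [map_zero, zero_mul]⟩⟩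
  algebraMap_mem' := by
    intro r
    exact ⟨0, fun y _ => ⟨r * y, by rw [map_mul]⟩⟩

end Overring


section MyGenericHelpers

variable {A : Type*} [CommRing A] {K : Type*} [Field K] [Algebra A K]

lemma mem_one_iff' {x : K} : x ∈ (1 : Submodule A K) ↔ ∃ a : A, algebraMap A K a = x := by
  rw [Submodule.one_eq_range]
  exact LinearMap.mem_range

lemma one_mem_one' : (1 : K) ∈ (1 : Submodule A K) := mem_one_iff'.2 ⟨1, map_one _⟩

lemma mul_mem_one' {x y : K} (hx : x ∈ (1 : Submodule A K)) (hy : y ∈ (1 : Submodule A K)) :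
    x * y ∈ (1 : Submodule A K) := by
  obtain ⟨a, rfl⟩ := mem_one_iff'.1 hx
  obtain ⟨b, rfl⟩ := mem_one_iff'.1 hy
  exact mem_one_iff'.2 ⟨a * b, map_mul _ _ _⟩

lemma one_le_one_div_of_le_one {J : Submodule A K} (h : J ≤ 1) : (1 : Submodule A K) ≤ 1 / J := by
  intro x hx
  rw [Submodule.mem_div_iff_forall_mul_mem]
  exact fun y hy => mul_mem_one' hx (h hy)

lemma one_div_anti {J J' : Submodule A K} (h : J ≤ J') : 1 / J' ≤ 1 / J := by
  intro x hx
  rw [Submodule.mem_div_iff_forall_mul_mem] at hx ⊢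
  exact fun y hy => hx y (h hy)

lemma vOp_mono {J J' : Submodule A K} (h : J ≤ J') : vOp J ≤ vOp J' :=
  one_div_anti (one_div_anti h)

lemma one_mem_vOp_iff {J : Submodule A K} :
    (1 : K) ∈ vOp J ↔ 1 / J ≤ (1 : Submodule A K) := by
  unfold vOp
  rw [Submodule.mem_div_iff_forall_mul_mem]
  constructor
  · intro h y hy
    simpa using h y hy
  · intro h y hy
    simpa using h hy

lemma vOp_le_one {J : Submodule A K} (h : J ≤ 1) : vOp J ≤ 1 := by
  intro x hx
  unfold vOp at hx
  rw [Submodule.mem_div_iff_forall_mul_mem] at hx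
  simpa using hx 1 (one_le_one_div_of_le_one h one_mem_one')

lemma tOp_le_one {X : Submodule A K} (h : X ≤ 1) : tOp X ≤ 1 := by
  unfold tOp
  apply sSup_le
  rintro V ⟨J, -, -, hJX, rfl⟩
  exact vOp_le_one (hJX.trans h)

lemma eq_one_of_one_mem_of_le_one {X : Submodule A K} (h1 : (1 : K) ∈ X) (hle : X ≤ 1) :
    X = 1 := by
  refine le_antisymm hle fun y hy => ?_
  obtain ⟨t, rfl⟩ := mem_one_iff'.1 hy
  simpa [Algebra.smul_def] using X.smul_mem t h1

lemma exists_fg_of_one_mem_tOp {X : Submodule A K} (h : (1 : K) ∈ tOp X) :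
    ∃ J : Submodule A K, J ≠ ⊥ ∧ J.FG ∧ J ≤ X ∧ (1 : K) ∈ vOp J := by
  unfold tOp at h
  have hS : {V | ∃ J : Submodule A K, J ≠ ⊥ ∧ J.FG ∧ J ≤ X ∧ V = vOp J}.Nonempty := by
    rcases Set.eq_empty_or_nonempty
      {V | ∃ J : Submodule A K, J ≠ ⊥ ∧ J.FG ∧ J ≤ X ∧ V = vOp J} with he | hne
    · rw [he, sSup_empty, Submodule.mem_bot] at h
      exact absurd h one_ne_zero
    · exact hne
  have hdir : DirectedOn (· ≤ ·)
      {V | ∃ J : Submodule A K, J ≠ ⊥ ∧ J.FG ∧ J ≤ X ∧ V = vOp J} := by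
    rintro V₁ ⟨J₁, hb₁, hf₁, hx₁, rfl⟩ V₂ ⟨J₂, hb₂, hf₂, hx₂, rfl⟩
    refine ⟨vOp (J₁ ⊔ J₂), ⟨J₁ ⊔ J₂, ?_, hf₁.sup hf₂, sup_le hx₁ hx₂, rfl⟩,
      vOp_mono le_sup_left, vOp_mono le_sup_right⟩
    intro hb
    exact hb₁ (le_bot_iff.mp (hb ▸ le_sup_left))
  rw [Submodule.mem_sSup_of_directed hS hdir] at h
  obtain ⟨V, ⟨J, hb, hf, hx, rfl⟩, hmem⟩ := h
  exact ⟨J, hb, hf, hx, hmem⟩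

end MyGenericHelpers


section MyDomainHelpers

variable {R : Type*} [CommRing R] [IsDomain R]
variable {K : Type*} [Field K] [Algebra R K] [IsFractionRing R K]

lemma mul_dual_le_aux {a b : R} (E : Submodule R K)
    (h : ∀ c d : R, c * a = d * b → algebraMap R K c ∈ E ∧ algebraMap R K d ∈ E) :
    toK R K (Ideal.span {a, b}) * dual (toK R K (Ideal.span {a, b})) ≤ E := by
  have hinj : Function.Injective (algebraMap R K) := IsFractionRing.injective R K
  rw [Submodule.mul_le]
  intro x hx y hy
  have hy' : ∀ z ∈ toK R K (Ideal.span {a, b}), y * z ∈ (1 : Submodule R K) :=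
    Submodule.mem_div_iff_forall_mul_mem.1 hy
  have hamem : algebraMap R K a ∈ toK R K (Ideal.span {a, b}) :=
    Submodule.mem_map_of_mem (Ideal.subset_span (Set.mem_insert a {b}))
  have hbmem : algebraMap R K b ∈ toK R K (Ideal.span {a, b}) :=
    Submodule.mem_map_of_mem (Ideal.subset_span (Set.mem_insert_of_mem a rfl))
  obtain ⟨d, hd⟩ := mem_one_iff'.1 (hy' _ hamem)
  obtain ⟨c, hc⟩ := mem_one_iff'.1 (hy' _ hbmem)
  have hrel : c * a = d * b := by
    apply hinj
    rw [map_mul, map_mul, hc, hd]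
    ring
  obtain ⟨hcE, hdE⟩ := h c d hrel
  have hxspan : x ∈ Submodule.span R ({algebraMap R K a, algebraMap R K b} : Set K) := by
    have heq : toK R K (Ideal.span {a, b}) =
        Submodule.span R ({algebraMap R K a, algebraMap R K b} : Set K) := by
      unfold toK
      rw [Ideal.span, Submodule.map_span, Set.image_insert_eq, Set.image_singleton]
      rfl
    rwa [heq] at hx
  clear hx
  induction hxspan using Submodule.span_induction with
  | mem z hz =>
      rcases hz with rfl | hz
      · rw [mul_comm, ← hd]; exact hdE
      · rw [Set.mem_singleton_iff] at hz
        subst hz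
        rw [mul_comm, ← hc]; exact hcE
  | zero => rw [zero_mul]; exact E.zero_mem
  | add w v _ _ ihw ihv => rw [add_mul]; exact E.add_mem ihw ihv
  | smul r w _ ihw => rw [smul_mul_assoc]; exact E.smul_mem r ihw

lemma pvmd_extract (hR : IsPVMD R K) {a b : R} (ha : a ≠ 0) (hb : b ≠ 0) :
    ∃ J₀ : Submodule R K, J₀ ≠ ⊥ ∧ J₀.FG ∧
      J₀ ≤ toK R K (Ideal.span {a, b}) * dual (toK R K (Ideal.span {a, b})) ∧
      J₀ ≤ 1 ∧ (1 : K) ∈ vOp J₀ := by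
  have hIbot : Ideal.span ({a, b} : Set R) ≠ ⊥ := by
    intro h
    rw [Ideal.span_eq_bot] at h
    exact ha (h a (Set.mem_insert a {b}))
  have hfg : (Ideal.span ({a, b} : Set R)).FG :=
    Submodule.fg_span ((Set.finite_singleton b).insert a)
  have hinv : tOp (toK R K (Ideal.span {a, b}) * dual (toK R K (Ideal.span {a, b}))) = 1 :=
    hR _ hIbot hfg
  have h1 : (1 : K) ∈ tOp (toK R K (Ideal.span {a, b}) * dual (toK R K (Ideal.span {a, b}))) := by
    rw [hinv]; exact one_mem_one'
  obtain ⟨J₀, hb₀, hf₀, hle₀, h1v⟩ := exists_fg_of_one_mem_tOp h1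
  have hM1 : toK R K (Ideal.span {a, b}) * dual (toK R K (Ideal.span {a, b})) ≤
      (1 : Submodule R K) := by
    rw [Submodule.mul_le]
    intro m hm n hn
    have := Submodule.mem_div_iff_forall_mul_mem.1 hn m hm
    rwa [mul_comm]
  exact ⟨J₀, hb₀, hf₀, hle₀, hle₀.trans hM1, h1v⟩

lemma pvmd_pair (hR : IsPVMD R K) {P : Ideal R} (hP : P.IsPrime) (htP : IsTIdeal K P)
    {a b : R} (ha : a ≠ 0) (hb : b ≠ 0) :
    ∃ s : R, s ∉ P ∧ ((∃ u : R, s * b = u * a) ∨ (∃ u : R, s * a = u * b)) := by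
  have hinj : Function.Injective (algebraMap R K) := IsFractionRing.injective R K
  obtain ⟨J₀, hb₀, hf₀, hle₀, -, h1v⟩ := pvmd_extract hR ha hb (K := K)
  set C₁ := (Ideal.span {a}).colon (Ideal.span {b}) with hC₁
  set C₂ := (Ideal.span {b}).colon (Ideal.span {a}) with hC₂
  have hE : toK R K (Ideal.span {a, b}) * dual (toK R K (Ideal.span {a, b})) ≤
      toK R K (C₁ ⊔ C₂) := by
    apply mul_dual_le_aux
    intro c d hrel
    constructor
    · refine Submodule.mem_map_of_mem (Submodule.mem_sup_right ?_)
      exact Ideal.mem_colon_span_singleton.2 (Ideal.mem_span_singleton.2 ⟨d, by rw [hrel, mul_comm]⟩)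
    · refine Submodule.mem_map_of_mem (Submodule.mem_sup_left ?_)
      exact Ideal.mem_colon_span_singleton.2 (Ideal.mem_span_singleton.2 ⟨c, by rw [← hrel, mul_comm]⟩)
  have hcases : ¬ (C₁ ⊔ C₂ ≤ P) := by
    intro hsubP
    have hJP : J₀ ≤ toK R K P := (hle₀.trans hE).trans (Submodule.map_mono hsubP)
    have hvle : vOp J₀ ≤ tOp (toK R K P) := le_sSup ⟨J₀, hb₀, hf₀, hJP, rfl⟩
    have htP' : tOp (toK R K P) = toK R K P := htP
    rw [htP'] at hvle
    obtain ⟨p, hp, hep⟩ := Submodule.mem_map.1 (hvle h1v)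
    have hp1 : p = 1 := hinj (by rw [map_one]; exact hep)
    exact hP.ne_top ((Ideal.eq_top_iff_one P).2 (hp1 ▸ hp))
  obtain ⟨w, hwmem, hwP⟩ := SetLike.not_le_iff_exists.1 hcases
  obtain ⟨s₁, hs₁, s₂, hs₂, rfl⟩ := Submodule.mem_sup.1 hwmem
  by_cases h1 : s₁ ∈ P
  · have h2 : s₂ ∉ P := fun h => hwP (P.add_mem h1 h)
    obtain ⟨u, hu⟩ := Ideal.mem_span_singleton.1 (Ideal.mem_colon_span_singleton.1 hs₂)
    exact ⟨s₂, h2, Or.inr ⟨u, by rw [hu, mul_comm]⟩⟩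
  · obtain ⟨u, hu⟩ := Ideal.mem_span_singleton.1 (Ideal.mem_colon_span_singleton.1 hs₁)
    exact ⟨s₁, h1, Or.inl ⟨u, by rw [hu, mul_comm]⟩⟩

lemma mem_extend_loc {P : Ideal R} (hP : P.IsPrime) {T : Subalgebra R K}
    (hsub : (T : Set K) ⊆ loc K P) {x : K} (hx : x ∈ extendI P T) :
    ∃ p ∈ P, ∃ σ : R, σ ∉ P ∧ x * algebraMap R K σ = algebraMap R K p := by
  have hone : (1 : R) ∉ P := fun h => hP.ne_top ((Ideal.eq_top_iff_one P).2 h)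
  unfold extendI at hx
  induction hx using Submodule.span_induction with
  | mem z hz =>
      obtain ⟨p, hp, rfl⟩ := hz
      exact ⟨p, hp, 1, hone, by rw [map_one, mul_one]⟩
  | zero => exact ⟨0, P.zero_mem, 1, hone, by simp⟩
  | add w v _ _ ihw ihv =>
      obtain ⟨p, hp, σ, hσ, hwe⟩ := ihw
      obtain ⟨q, hq, τ, hτ, hve⟩ := ihv
      refine ⟨p * τ + q * σ, P.add_mem (P.mul_mem_right _ hp) (P.mul_mem_right _ hq),
        σ * τ, fun h => ((hP.mem_or_mem h).elim hσ hτ), ?_⟩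
      rw [map_mul, map_add, map_mul, map_mul]
      calc (w + v) * (algebraMap R K σ * algebraMap R K τ)
          = (w * algebraMap R K σ) * algebraMap R K τ
            + (v * algebraMap R K τ) * algebraMap R K σ := by ring
        _ = _ := by rw [hwe, hve]
  | smul t z _ ih =>
      obtain ⟨p, hp, σ, hσ, hze⟩ := ih
      obtain ⟨aT, sT, hsT, htT⟩ := hsub t.2
      refine ⟨aT * p, P.mul_mem_left aT hp, sT * σ,
        fun h => ((hP.mem_or_mem h).elim hsT hσ), ?_⟩
      have hts : t • z = (t : K) * z := by rw [Algebra.smul_def]; rfl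
      rw [hts, map_mul, map_mul]
      calc (t : K) * z * (algebraMap R K sT * algebraMap R K σ)
          = ((t : K) * algebraMap R K sT) * (z * algebraMap R K σ) := by ring
        _ = algebraMap R K aT * algebraMap R K p := by rw [htT, hze]

lemma rel_total (hR : IsPVMD R K) {P : Ideal R} (hP : P.IsPrime) (htP : IsTIdeal K P)
    {x z : K} (hx0 : x ≠ 0) (hz0 : z ≠ 0)
    (hx : ∃ p ∈ P, ∃ σ : R, σ ∉ P ∧ x * algebraMap R K σ = algebraMap R K p)
    (hz : ∃ p ∈ P, ∃ σ : R, σ ∉ P ∧ z * algebraMap R K σ = algebraMap R K p) :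
    (∃ σ : R, σ ∉ P ∧ ∃ r : R, x * algebraMap R K σ = z * algebraMap R K r) ∨
    (∃ σ : R, σ ∉ P ∧ ∃ r : R, z * algebraMap R K σ = x * algebraMap R K r) := by
  have hinj : Function.Injective (algebraMap R K) := IsFractionRing.injective R K
  obtain ⟨px, hpx, σx, hσx, hex⟩ := hx
  obtain ⟨pz, hpz, σz, hσz, hez⟩ := hz
  have hnotP : ∀ {w : R}, w ∉ P → w ≠ 0 := fun {w} hw h0 => hw (h0 ▸ P.zero_mem)
  have hσxK : algebraMap R K σx ≠ 0 := (map_ne_zero_iff _ hinj).2 (hnotP hσx)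
  have hσzK : algebraMap R K σz ≠ 0 := (map_ne_zero_iff _ hinj).2 (hnotP hσz)
  have hpx0 : px ≠ 0 := by
    intro h0
    rw [h0, map_zero] at hex
    rcases mul_eq_zero.1 hex with h | h
    exacts [hx0 h, hσxK h]
  have hpz0 : pz ≠ 0 := by
    intro h0
    rw [h0, map_zero] at hez
    rcases mul_eq_zero.1 hez with h | h
    exacts [hz0 h, hσzK h]
  have ha0 : px * σz ≠ 0 := mul_ne_zero hpx0 (hnotP hσz)
  have hb0 : pz * σx ≠ 0 := mul_ne_zero hpz0 (hnotP hσx)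
  obtain ⟨s', hs', hcase⟩ := pvmd_pair hR hP htP ha0 hb0 (K := K)
  rcases hcase with ⟨u, hu⟩ | ⟨u, hu⟩
  · -- s' * (pz * σx) = u * (px * σz) : z ≼ x
    refine Or.inr ⟨σz * σx * s',
      fun h => ((hP.mem_or_mem h).elim (fun h2 => (hP.mem_or_mem h2).elim hσz hσx) hs'),
      u * σz * σx, ?_⟩
    have huK : algebraMap R K s' * (algebraMap R K pz * algebraMap R K σx) =
        algebraMap R K u * (algebraMap R K px * algebraMap R K σz) := by
      rw [← map_mul, ← map_mul, ← map_mul, ← map_mul, hu]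
    simp only [map_mul]
    linear_combination (algebraMap R K σx * algebraMap R K s') * hez
      - (algebraMap R K u * algebraMap R K σz) * hex + huK
  · -- s' * (px * σz) = u * (pz * σx) : x ≼ z
    refine Or.inl ⟨σx * σz * s',
      fun h => ((hP.mem_or_mem h).elim (fun h2 => (hP.mem_or_mem h2).elim hσx hσz) hs'),
      u * σx * σz, ?_⟩
    have huK : algebraMap R K s' * (algebraMap R K px * algebraMap R K σz) =
        algebraMap R K u * (algebraMap R K pz * algebraMap R K σx) := by
      rw [← map_mul, ← map_mul, ← map_mul, ← map_mul, hu]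
    simp only [map_mul]
    linear_combination (algebraMap R K σz * algebraMap R K s') * hex
      - (algebraMap R K u * algebraMap R K σx) * hez + huK

lemma exists_dominant (hR : IsPVMD R K) {P : Ideal R} (hP : P.IsPrime) (htP : IsTIdeal K P)
    (s : Finset K)
    (hdata : ∀ x ∈ s, ∃ p ∈ P, ∃ σ : R, σ ∉ P ∧ x * algebraMap R K σ = algebraMap R K p)
    (hnz : ∃ x ∈ s, x ≠ 0) :
    ∃ z ∈ s, z ≠ 0 ∧ ∀ x ∈ s, ∃ σ : R, σ ∉ P ∧ ∃ r : R,
      x * algebraMap R K σ = z * algebraMap R K r := by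
  have hone : (1 : R) ∉ P := fun h => hP.ne_top ((Ideal.eq_top_iff_one P).2 h)
  classical
  revert hdata hnz
  induction s using Finset.induction_on with
  | empty =>
      intro _ hnz
      simp at hnz
  | @insert a s ha IH =>
      intro hdata hnz
      by_cases hs0 : ∃ x ∈ s, x ≠ 0
      · obtain ⟨z, hzs, hz0, hdom⟩ := IH (fun x hx => hdata x (Finset.mem_insert_of_mem hx)) hs0
        by_cases hA : a = 0
        · refine ⟨z, Finset.mem_insert_of_mem hzs, hz0, ?_⟩
          intro x hx
          rcases Finset.mem_insert.1 hx with rfl | hx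
          · exact ⟨1, hone, 0, by simp [hA]⟩
          · exact hdom x hx
        · rcases rel_total hR hP htP hA hz0 (hdata a (Finset.mem_insert_self a s))
            (hdata z (Finset.mem_insert_of_mem hzs)) with hcase | hcase
          · refine ⟨z, Finset.mem_insert_of_mem hzs, hz0, ?_⟩
            intro x hx
            rcases Finset.mem_insert.1 hx with rfl | hx
            · exact hcase
            · exact hdom x hx
          · refine ⟨a, Finset.mem_insert_self a s, hA, ?_⟩
            intro x hx
            rcases Finset.mem_insert.1 hx with rfl | hx
            · exact ⟨1, hone, 1, rfl⟩
            · obtain ⟨σ₁, hσ₁, r₁, h₁⟩ := hdom x hx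
              obtain ⟨σ₂, hσ₂, r₂, h₂⟩ := hcase
              refine ⟨σ₁ * σ₂, fun h => (hP.mem_or_mem h).elim hσ₁ hσ₂, r₂ * r₁, ?_⟩
              simp only [map_mul]
              linear_combination (algebraMap R K σ₂) * h₁ + (algebraMap R K r₁) * h₂
      · push_neg at hs0
        obtain ⟨w, hw, hw0⟩ := hnz
        have haw : a ≠ 0 := by
          rcases Finset.mem_insert.1 hw with rfl | hw'
          · exact hw0
          · exact absurd (hs0 w hw') hw0
        refine ⟨a, Finset.mem_insert_self a s, haw, ?_⟩
        intro x hx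
        rcases Finset.mem_insert.1 hx with rfl | hx
        · exact ⟨1, hone, 1, rfl⟩
        · exact ⟨1, hone, 0, by simp [hs0 x hx]⟩

end MyDomainHelpers

section Statements

variable {R : Type*} [CommRing R] [IsDomain R]
variable {K : Type*} [Field K] [Algebra R K] [IsFractionRing R K]

/-- Let `R` be a PVMD, `T` a `t`-linked overring of `R`, and `P` a
nonzero `t`-prime ideal of `R`. Then `(PT)_{t₁} ≠ T` iff `T ⊆ R_P`. -/
theorem statement_5 (hR : IsPVMD R K) (T : Subalgebra R K) (hT : IsTLinked T)
    (P : Ideal R) (hbot : P ≠ ⊥) (hP : P.IsPrime) (htP : IsTIdeal K P) :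
    tOp (extendI P T) ≠ 1 ↔ (T : Set K) ⊆ loc K P := by
  have hinj : Function.Injective (algebraMap R K) := IsFractionRing.injective R K
  have hone : (1 : R) ∉ P := fun h => hP.ne_top ((Ideal.eq_top_iff_one P).2 h)
  have hPT1 : extendI P T ≤ (1 : Submodule T K) := by
    unfold extendI
    rw [Submodule.span_le]
    rintro x ⟨p, hp, rfl⟩
    exact mem_one_iff'.2 ⟨⟨algebraMap R K p, T.algebraMap_mem p⟩, rfl⟩
  constructor
  · -- (PT)_{t₁} ≠ T → T ⊆ R_P
    intro hne
    by_contra hsub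
    apply hne
    obtain ⟨t, htT, htloc⟩ := Set.not_subset.1 hsub
    have ht0 : t ≠ 0 := by
      intro h
      exact htloc ⟨0, 1, hone, by simp [h]⟩
    obtain ⟨⟨aR, bR⟩, hab⟩ := IsLocalization.surj (nonZeroDivisors R) t
    have hb : (bR : R) ≠ 0 := nonZeroDivisors.ne_zero bR.2
    have hbK : algebraMap R K (bR : R) ≠ 0 := (map_ne_zero_iff _ hinj).2 hb
    have haR : aR ≠ 0 := by
      intro h
      rw [h, map_zero] at hab
      rcases mul_eq_zero.1 hab with h | h
      exacts [ht0 h, hbK h]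
    obtain ⟨J₀, hb₀, hf₀, hle₀, hJ₀1, h1v⟩ := pvmd_extract hR haR hb (K := K)
    have hEsub : J₀ ≤ (extendI P T).restrictScalars R := by
      refine hle₀.trans (mul_dual_le_aux _ ?_)
      intro c d hrel
      have hK : algebraMap R K c * (t * algebraMap R K (bR : R)) =
          algebraMap R K d * algebraMap R K (bR : R) := by
        rw [hab, ← map_mul, ← map_mul, hrel]
      have hct : t * algebraMap R K c = algebraMap R K d :=
        mul_right_cancel₀ hbK (by linear_combination hK)
      have hcP : c ∈ P := by
        by_contra hc
        exact htloc ⟨d, c, hc, hct⟩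
      have hcE : algebraMap R K c ∈ extendI P T :=
        Submodule.subset_span ⟨c, hcP, rfl⟩
      refine ⟨hcE, ?_⟩
      have hsm : (⟨t, htT⟩ : T) • (algebraMap R K c) ∈ extendI P T :=
        Submodule.smul_mem _ _ hcE
      have hsm' : (⟨t, htT⟩ : T) • (algebraMap R K c) = t * algebraMap R K c := by
        rw [Algebra.smul_def]; rfl
      rw [hsm', hct] at hsm
      exact hsm
    set J₁ : Ideal R := Submodule.comap (Algebra.linearMap R K) J₀ with hJ₁
    have hmap : Submodule.map (Algebra.linearMap R K) J₁ = J₀ := by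
      rw [hJ₁, Submodule.map_comap_eq, ← Submodule.one_eq_range, inf_eq_right.2 hJ₀1]
    have hfg₁ : J₁.FG := by
      apply Submodule.fg_of_fg_map_injective (Algebra.linearMap R K) hinj
      rw [hmap]
      exact hf₀
    have hdual₁ : dual (toK R K J₁) = 1 := by
      show (1 : Submodule R K) / toK R K J₁ = 1
      have htk : toK R K J₁ = J₀ := hmap
      rw [htk]
      exact le_antisymm (one_mem_vOp_iff.1 h1v) (one_le_one_div_of_le_one hJ₀1)
    have hTl : dual (extendI J₁ T) = 1 := hT J₁ hfg₁ hdual₁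
    have hle : extendI J₁ T ≤ extendI P T := by
      unfold extendI
      rw [Submodule.span_le]
      rintro x ⟨r, hr, rfl⟩
      exact hEsub (hmap ▸ Submodule.mem_map_of_mem hr)
    have hneB : extendI J₁ T ≠ ⊥ := by
      obtain ⟨x, hx, hx0⟩ := (Submodule.ne_bot_iff J₀).1 hb₀
      refine (Submodule.ne_bot_iff _).2 ⟨x, ?_, hx0⟩
      rw [← hmap] at hx
      obtain ⟨r, hr, rfl⟩ := Submodule.mem_map.1 hx
      exact Submodule.subset_span ⟨r, hr, rfl⟩
    have hfgB : (extendI J₁ T).FG := by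
      obtain ⟨u, hu⟩ := hfg₁
      have heq : extendI J₁ T = Submodule.span T (algebraMap R K '' (↑u : Set R)) := by
        apply le_antisymm
        · unfold extendI
          rw [Submodule.span_le]
          rintro x ⟨r, hr, rfl⟩
          have hu' : Submodule.span R (↑u : Set R) = J₁ := hu
          have hr' : r ∈ Submodule.span R (↑u : Set R) := by rw [hu']; exact hr
          clear hr
          induction hr' using Submodule.span_induction with
          | mem w hw => exact Submodule.subset_span ⟨w, hw, rfl⟩
          | zero => rw [map_zero]; exact Submodule.zero_mem _
          | add w v _ _ ihw ihv => rw [map_add]; exact Submodule.add_mem _ ihw ihv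
          | smul c w _ ihw =>
              rw [smul_eq_mul, map_mul]
              have := Submodule.smul_mem (Submodule.span T (algebraMap R K '' (↑u : Set R)))
                (⟨algebraMap R K c, T.algebraMap_mem c⟩ : T) ihw
              rwa [show (⟨algebraMap R K c, T.algebraMap_mem c⟩ : T) • algebraMap R K w
                = algebraMap R K c * algebraMap R K w from by rw [Algebra.smul_def]; rfl] at this
        · apply Submodule.span_mono
          apply Set.image_mono
          rw [← hu]
          exact Submodule.subset_span
      rw [heq]
      exact Submodule.fg_span ((u.finite_toSet).image _)
    have h1vB : (1 : K) ∈ vOp (extendI J₁ T) := by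
      show (1 : K) ∈ (1 : Submodule T K) / ((1 : Submodule T K) / extendI J₁ T)
      have hd : (1 : Submodule T K) / extendI J₁ T = 1 := hTl
      rw [hd, Submodule.mem_div_iff_forall_mul_mem]
      intro y hy
      rwa [one_mul]
    have h1t : (1 : K) ∈ tOp (extendI P T) := by
      have hmem : vOp (extendI J₁ T) ≤ tOp (extendI P T) :=
        le_sSup ⟨extendI J₁ T, hneB, hfgB, hle, rfl⟩
      exact hmem h1vB
    exact eq_one_of_one_mem_of_le_one h1t (tOp_le_one hPT1)
  · -- T ⊆ R_P → (PT)_{t₁} ≠ T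
    intro hsub hEq
    have h1 : (1 : K) ∈ tOp (extendI P T) := by rw [hEq]; exact one_mem_one'
    obtain ⟨J, hJb, hJf, hJle, h1v⟩ := exists_fg_of_one_mem_tOp h1
    have hJdual : (1 : Submodule T K) / J ≤ 1 := one_mem_vOp_iff.1 h1v
    obtain ⟨s, hs⟩ := hJf
    have hsJ : (↑s : Set K) ⊆ J := hs ▸ Submodule.subset_span
    have hdata : ∀ x ∈ s, ∃ p ∈ P, ∃ σ : R, σ ∉ P ∧
        x * algebraMap R K σ = algebraMap R K p :=
      fun x hx => mem_extend_loc hP hsub (hJle (hsJ hx))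
    have hnz : ∃ x ∈ s, x ≠ 0 := by
      by_contra hno
      push_neg at hno
      apply hJb
      rw [← hs]
      exact Submodule.span_eq_bot.2 hno
    obtain ⟨z, hzs, hz0, hdom⟩ := exists_dominant hR hP htP s hdata hnz
    classical
    have hchoice : ∀ x : K, ∃ σr : R × R, x ∈ s →
        (σr.1 ∉ P ∧ x * algebraMap R K σr.1 = z * algebraMap R K σr.2) := by
      intro x
      by_cases hx : x ∈ s
      · obtain ⟨σ, hσ, r, hr⟩ := hdom x hx
        exact ⟨(σ, r), fun _ => ⟨hσ, hr⟩⟩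
      · exact ⟨(1, 1), fun h => absurd h hx⟩
    choose F hF using hchoice
    set σstar : R := ∏ x ∈ s, (F x).1 with hσstar
    have hσstarP : σstar ∉ P :=
      Finset.prod_induction _ (fun w => w ∉ P)
        (fun w v hw hv h => (hP.mem_or_mem h).elim hw hv) hone (fun x hx => (hF x hx).1)
    obtain ⟨p₀, hp₀, σ₀, hσ₀, hz₀⟩ := hdata z hzs
    set u : K := algebraMap R K σstar / z with hu
    have hmemdiv : u ∈ (1 : Submodule T K) / J := by
      rw [Submodule.mem_div_iff_forall_mul_mem]
      intro y hy
      rw [← hs] at hy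
      induction hy using Submodule.span_induction with
      | mem x hx =>
          have hxs : x ∈ s := hx
          obtain ⟨hFP, hFx⟩ := hF x hxs
          have hprod : algebraMap R K σstar =
              algebraMap R K (F x).1 * algebraMap R K (∏ y ∈ s.erase x, (F y).1) := by
            rw [← map_mul, Finset.mul_prod_erase s (fun y => (F y).1) hxs]
          have hkey : u * x = algebraMap R K (∏ y ∈ s.erase x, (F y).1)
              * algebraMap R K (F x).2 := by
            rw [hu, div_mul_eq_mul_div, div_eq_iff hz0]
            linear_combination algebraMap R K (∏ y ∈ s.erase x, (F y).1) * hFx + x * hprod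
          rw [hkey, ← map_mul]
          exact mem_one_iff'.2 ⟨⟨_, T.algebraMap_mem _⟩, rfl⟩
      | zero => rw [mul_zero]; exact Submodule.zero_mem _
      | add y w _ _ ihy ihw => rw [mul_add]; exact Submodule.add_mem _ ihy ihw
      | smul c y _ ih =>
          have hcm : u * (c • y) = c • (u * y) := by
            rw [Algebra.smul_def, Algebra.smul_def]; ring
          rw [hcm]
          exact Submodule.smul_mem _ c ih
    obtain ⟨tu, htu⟩ := mem_one_iff'.1 (hJdual hmemdiv)
    have huT : u ∈ (T : Set K) := by rw [← htu]; exact tu.2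
    obtain ⟨a', s', hs', hus⟩ := hsub huT
    have hus' : algebraMap R K σstar * algebraMap R K s' = algebraMap R K a' * z := by
      rw [hu, div_mul_eq_mul_div, div_eq_iff hz0] at hus
      linear_combination hus
    have hfin : σstar * s' * σ₀ = p₀ * a' := by
      apply hinj
      simp only [map_mul]
      linear_combination (algebraMap R K σ₀) * hus' + (algebraMap R K a') * hz₀
    have hmemP : σstar * s' * σ₀ ∈ P := hfin ▸ P.mul_mem_right a' hp₀
    rcases hP.mem_or_mem hmemP with h | h
    · rcases hP.mem_or_mem h with h | h
      exacts [hσstarP h, hs' h]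
    · exact hσ₀ h

end Statements

end

end PVMDPaper
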